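/- With notation as in the construction of anti-associated polynomials: let $P_n$ satisfy the recurrence with coefficients $(b_n, a_n^2)$, let $Q_n$ ($0\le n\le r$) be the polynomials generated by the new coefficients $b_{-r},\dots,b_{-1}$ and $a_{-r+1}^2,\dots,a_{-1}^2$ via $Q_0=1$, $Q_{-1}=0$, $Q_{n+1}(x)=(x-b_{-r+n})Q_n(x)-a_{-r+n}^2Q_{n-1}(x)$ for $n\le r-1$, and let $P_n^{(-r)}$ be the anti-associated polynomials defined by the extended recurrence. Then for all $n\ge0$, $P_{n+r}^{(-r)}(x) = Q_r(x)P_n(x) - a_0^2 Q_{r-1}(x)P_{n-1}^{(1)}(x)$. -/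
import Mathlib


open Polynomial

/-- Representation of the anti-associated polynomials:
`P_{n+r}^{(-r)} = Q_r P_n - a_0^2 Q_{r-1} P_{n-1}^{(1)}`.
Here `c n = b_{-r+n}` and `d n = a_{-r+n}^2` are the new coefficients
(`d r = a_0^2` is the new off-diagonal parameter). -/
theorem antiassociated_representation
    (r : ℕ) (hr : 1 ≤ r)
    (b a2 : ℕ → ℝ) (ha : ∀ n, 1 ≤ n → a2 n ≠ 0)
    (c d : ℕ → ℝ) (hd : d r ≠ 0)
    (P P1 Q Panti : ℕ → Polynomial ℝ)
    -- the original monic orthogonal polynomials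
    (hP0 : P 0 = 1) (hP1 : P 1 = X - C (b 0))
    (hP : ∀ n, 1 ≤ n → P (n + 1) = (X - C (b n)) * P n - C (a2 n) * P (n - 1))
    -- the associated polynomials of order 1
    (hP10 : P1 0 = 1) (hP11 : P1 1 = X - C (b 1))
    (hP1rec : ∀ n, 1 ≤ n →
      P1 (n + 1) = (X - C (b (n + 1))) * P1 n - C (a2 (n + 1)) * P1 (n - 1))
    -- the polynomials generated by the new coefficients
    (hQ0 : Q 0 = 1) (hQ1 : Q 1 = X - C (c 0))
    (hQ : ∀ n, 1 ≤ n → n ≤ r - 1 →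
      Q (n + 1) = (X - C (c n)) * Q n - C (d n) * Q (n - 1))
    -- the anti-associated polynomials
    (hPanti_init : ∀ n, n ≤ r → Panti n = Q n)
    (hPanti : ∀ n : ℕ, Panti (n + r + 1) =
      (X - C (b n)) * Panti (n + r) - C (a2 n) * Panti (n + r - 1))
    (ha2zero : a2 0 = d r) :
    ∀ n : ℕ, Panti (n + r) =
      Q r * P n - C (a2 0) * Q (r - 1) * (if n = 0 then 0 else P1 (n - 1)) := by
  intro n
  induction n using Nat.strong_induction_on with
  | _ n ih =>
    match n with
    | 0 => simp [hPanti_init r le_rfl, hP0]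
    | 1 =>
      have h0 := hPanti 0
      simp only [Nat.zero_add] at h0
      rw [hPanti_init r le_rfl, hPanti_init (r-1) (Nat.sub_le _ _)] at h0
      have e : 1 + r = r + 1 := by omega
      rw [e, h0, hP1, hP10]
      simp only [if_neg (one_ne_zero)]
      ring
    | (m+2) =>
      have h := hPanti (m+1)
      have e1 : m + 1 + r + 1 = m + 2 + r := by omega
      have e2 : m + 1 + r - 1 = m + r := by omega
      rw [e1, e2, ih (m+1) (by omega), ih m (by omega)] at h
      rw [h, hP (m+1) (by omega)]
      simp only [Nat.add_sub_cancel, Nat.succ_ne_zero, if_false]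
      cases m with
      | zero =>
        simp only [hP11, hP10, hP0, reduceIte]
        ring
      | succ k =>
        have e3 : k + 1 + 2 - 1 = k + 1 + 1 := rfl
        rw [e3, hP1rec (k+1) (by omega), if_neg (Nat.succ_ne_zero k)]
        simp only [Nat.add_sub_cancel]
        ring
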